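/- For every ε > 0 and every positive integer d, the number T(H, d²) of pairs of positive integers x, y ≤ H with x² + y² + 1 ≡ 0 (mod d²) satisfies T(H, d²) ≪_ε H^{2+ε}/d², uniformly in d and H ≥ 2. -/

import Mathlib

open Finset

/-- T(H, q) = number of pairs of positive integers x, y ≤ H with x² + y² + 1 ≡ 0 (mod q). -/
noncomputable def Tcount (H : ℝ) (q : ℕ) : ℕ :=
  ((Finset.Icc 1 ⌊H⌋₊ ×ˢ Finset.Icc 1 ⌊H⌋₊).filter
    (fun p : ℕ × ℕ => (q : ℤ) ∣ ((p.1 : ℤ)^2 + (p.2 : ℤ)^2 + 1))).card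


lemma unit_of_root {n : ℕ} [NeZero n] {t : ZMod n} (ht : t^2 = -1) : IsUnit t :=
  IsUnit.of_mul_eq_one (-t) (by rw [mul_neg, ← sq, ht, neg_neg])

lemma roots_prime_pow (p k : ℕ) (hp : p.Prime) (hk : k ≠ 0) [NeZero (p^k)] :
    ((Finset.univ : Finset (ZMod (p^k))).filter (fun s => s^2 = -1)).card ≤ 2 := by
  rcases eq_or_ne p 2 with rfl | hp2
  · rcases Nat.lt_or_ge k 2 with hkk | hkk
    · interval_cases k
      · simp at hk
      · exact (Finset.card_filter_le _ _).trans (by simp [ZMod.card])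
    · have h4 : (4 : ℕ) ∣ 2^k := by
        calc (4:ℕ) = 2^2 := by norm_num
        _ ∣ 2^k := pow_dvd_pow 2 hkk
      have hemp : ((Finset.univ : Finset (ZMod (2^k))).filter (fun s => s^2 = -1)) = ∅ := by
        rw [Finset.filter_eq_empty_iff]
        intro s _ hs
        have this : (ZMod.castHom h4 (ZMod 4) s)^2 = -1 := by
          rw [← map_pow, hs, map_neg, map_one]
        have hall : ∀ t : ZMod 4, t^2 ≠ -1 := by decide
        exact hall _ this
      simp [hemp]
  · have hodd : Odd p := hp.odd_of_ne_two hp2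
    have hpi : Prime (p:ℤ) := Nat.prime_iff_prime_int.mp hp
    by_cases hne : ((Finset.univ : Finset (ZMod (p^k))).filter (fun s => s^2 = -1)).Nonempty
    · obtain ⟨s, hs⟩ := hne
      simp only [Finset.mem_filter, Finset.mem_univ, true_and] at hs
      have hsub : ((Finset.univ : Finset (ZMod (p^k))).filter (fun t => t^2 = -1)) ⊆ {s, -s} := by
        intro t ht'
        simp only [Finset.mem_filter, Finset.mem_univ, true_and] at ht'
        have hdvd : ((p:ℤ)^k) ∣ ((t.val : ℤ) - s.val) * ((t.val : ℤ) + s.val) := by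
          have heq : ((t.val : ℤ) - s.val) * ((t.val : ℤ) + s.val) = (t.val:ℤ)^2 - (s.val:ℤ)^2 := by ring
          rw [heq]
          have h2 : ((((t.val:ℤ)^2 - (s.val:ℤ)^2 : ℤ)) : ZMod (p^k)) = 0 := by
            push_cast
            rw [ZMod.natCast_val, ZMod.natCast_val, ZMod.cast_id, ZMod.cast_id, ht', hs]
            ring
          rwa [ZMod.intCast_zmod_eq_zero_iff_dvd, Nat.cast_pow] at h2
        -- p does not divide t.val
        have hptv : ¬ (p:ℤ) ∣ (t.val : ℤ) := by
          have hu : IsUnit ((t.val : ZMod (p^k))) := by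
            rw [ZMod.natCast_val, ZMod.cast_id]; exact unit_of_root ht'
          have hcop : Nat.Coprime t.val (p^k) := (ZMod.isUnit_iff_coprime _ _).mp hu
          intro hdv
          rw [Int.natCast_dvd_natCast] at hdv
          have : p ∣ Nat.gcd t.val (p^k) := Nat.dvd_gcd hdv (dvd_pow_self p hk)
          rw [hcop] at this
          exact hp.one_lt.ne' (Nat.dvd_one.mp this)
        have hnboth : ¬ ((p:ℤ) ∣ ((t.val : ℤ) - s.val) ∧ (p:ℤ) ∣ ((t.val : ℤ) + s.val)) := by
          rintro ⟨h1, h2⟩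
          have h3 : (p:ℤ) ∣ 2 * (t.val : ℤ) := by
            have := dvd_add h1 h2
            have he : ((t.val : ℤ) - s.val) + ((t.val : ℤ) + s.val) = 2 * t.val := by ring
            rwa [he] at this
          rcases hpi.dvd_mul.mp h3 with h | h
          · have h2' : p ∣ 2 := by exact_mod_cast h
            exact hp2 ((Nat.prime_dvd_prime_iff_eq hp Nat.prime_two).mp h2')
          · exact hptv h
        have key : t = s ∨ t = -s := by
          by_cases hB : (p:ℤ) ∣ ((t.val : ℤ) + s.val)
          · have hA : ¬ (p:ℤ) ∣ ((t.val : ℤ) - s.val) := fun h => hnboth ⟨h, hB⟩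
            have : ((p:ℤ)^k) ∣ ((t.val : ℤ) + s.val) :=
              hpi.pow_dvd_of_dvd_mul_left k hA hdvd
            right
            have h0 : (((t.val : ℤ) + s.val : ℤ) : ZMod (p^k)) = 0 := by
              rw [ZMod.intCast_zmod_eq_zero_iff_dvd]; exact_mod_cast this
            push_cast at h0
            rw [ZMod.natCast_val, ZMod.natCast_val, ZMod.cast_id, ZMod.cast_id] at h0
            linear_combination h0
          · have : ((p:ℤ)^k) ∣ ((t.val : ℤ) - s.val) :=
              hpi.pow_dvd_of_dvd_mul_right k hB hdvd
            left
            have h0 : (((t.val : ℤ) - s.val : ℤ) : ZMod (p^k)) = 0 := by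
              rw [ZMod.intCast_zmod_eq_zero_iff_dvd]; exact_mod_cast this
            push_cast at h0
            rw [ZMod.natCast_val, ZMod.natCast_val, ZMod.cast_id, ZMod.cast_id] at h0
            linear_combination h0
        rcases key with h | h <;> simp [h]
      calc _ ≤ ({s, -s} : Finset _).card := Finset.card_le_card hsub
        _ ≤ 2 := (Finset.card_insert_le _ _).trans (by simp)
    · rw [Finset.not_nonempty_iff_eq_empty] at hne
      simp [hne]

noncomputable def rho (n : ℕ) : ℕ := Nat.card {s : ZMod n // s^2 = -1}

lemma rho_le_tau : ∀ (n : ℕ), n ≠ 0 → rho n ≤ n.divisors.card := by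
  intro n
  induction n using Nat.recOnPosPrimePosCoprime with
  | prime_pow p k hpp hk =>
    intro hn
    haveI : NeZero (p^k) := ⟨hn⟩
    have h1 : rho (p^k) ≤ 2 := by
      rw [rho, Nat.card_eq_fintype_card, Fintype.card_subtype]
      exact roots_prime_pow p k hpp hk.ne'
    refine h1.trans ?_
    have hsub : ({1, p^k} : Finset ℕ) ⊆ (p^k).divisors := by
      intro x hx
      simp only [Finset.mem_insert, Finset.mem_singleton] at hx
      rcases hx with rfl | rfl
      · exact Nat.one_mem_divisors.mpr hn
      · exact Nat.mem_divisors_self _ hn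
    have hcard : ({1, p^k} : Finset ℕ).card = 2 := by
      rw [Finset.card_insert_of_notMem (by simp; exact fun h => (Nat.one_lt_pow hk.ne' hpp.one_lt).ne h), Finset.card_singleton]
    rw [← hcard]
    exact Finset.card_le_card hsub
  | zero => intro h; simp at h
  | one =>
    intro _
    have h1 : rho 1 ≤ Fintype.card (ZMod 1) := by
      rw [rho, Nat.card_eq_fintype_card]
      exact Fintype.card_subtype_le _
    simpa using h1
  | coprime a b ha hb hab iha ihb =>
    intro hn
    have ha0 : a ≠ 0 := by positivity
    have hb0 : b ≠ 0 := by omega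
    have e := (ZMod.chineseRemainder hab)
    have key : ∀ s : ZMod (a*b), (s^2 = -1) ↔ ((e s).1^2 = -1 ∧ (e s).2^2 = -1) := by
      intro s
      constructor
      · intro h
        have h2 : (e s)^2 = -1 := by rw [← map_pow, h, map_neg, map_one]
        constructor
        · rw [← Prod.pow_fst, h2]; rfl
        · rw [← Prod.pow_snd, h2]; rfl
      · rintro ⟨h1, h2⟩
        have h3 : (e s)^2 = -1 := by
          rw [Prod.ext_iff]
          exact ⟨by rw [Prod.pow_fst, h1]; rfl, by rw [Prod.pow_snd, h2]; rfl⟩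
        exact e.injective (by rw [map_pow, h3, map_neg, map_one])
    have hequiv : {s : ZMod (a*b) // s^2 = -1} ≃ {x : ZMod a // x^2 = -1} × {y : ZMod b // y^2 = -1} :=
      (e.toEquiv.subtypeEquiv key).trans (Equiv.subtypeProdEquivProd)
    have : rho (a*b) = rho a * rho b := by
      rw [rho, Nat.card_congr hequiv, Nat.card_prod]; rfl
    rw [this, Nat.Coprime.card_divisors_mul hab]
    exact Nat.mul_le_mul (iha ha0) (ihb hb0)
lemma cross_eq {a b a' b' N : ℕ} (ha : 1 ≤ a) (hb : 1 ≤ b) (ha' : 1 ≤ a') (hb' : 1 ≤ b')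
    (e1 : a^2 + b^2 = N) (e2 : a'^2 + b'^2 = N)
    (hd : (N:ℤ) ∣ ((a' * b : ℕ) : ℤ) - ((a * b' : ℕ) : ℤ)) : a' * b = a * b' := by
  have hca : (1:ℤ) ≤ (a:ℤ) := by exact_mod_cast ha
  have hcb : (1:ℤ) ≤ (b:ℤ) := by exact_mod_cast hb
  have hca' : (1:ℤ) ≤ (a':ℤ) := by exact_mod_cast ha'
  have hcb' : (1:ℤ) ≤ (b':ℤ) := by exact_mod_cast hb'
  have ie1 : (a:ℤ)^2 + (b:ℤ)^2 = (N:ℤ) := by exact_mod_cast e1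
  have ie2 : (a':ℤ)^2 + (b':ℤ)^2 = (N:ℤ) := by exact_mod_cast e2
  have hid : ((a':ℤ)*(b:ℤ) - (a:ℤ)*(b':ℤ))^2 + ((a:ℤ)*(a':ℤ) + (b:ℤ)*(b':ℤ))^2
      = ((a:ℤ)^2 + (b:ℤ)^2) * ((a':ℤ)^2 + (b':ℤ)^2) := by ring
  have t1 : (1:ℤ)*1 ≤ (a:ℤ)*(a':ℤ) := mul_le_mul hca hca' zero_le_one (by linarith)
  have t2 : (1:ℤ)*1 ≤ (b:ℤ)*(b':ℤ) := mul_le_mul hcb hcb' zero_le_one (by linarith)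
  have hge : (1:ℤ) ≤ (a:ℤ)*(a':ℤ) + (b:ℤ)*(b':ℤ) := by linarith
  have hNN : (N:ℤ)^2 = ((a:ℤ)^2 + (b:ℤ)^2) * ((a':ℤ)^2 + (b':ℤ)^2) := by
    rw [ie1, ie2]; ring
  have hsq : (1:ℤ) ≤ ((a:ℤ)*(a':ℤ) + (b:ℤ)*(b':ℤ))^2 := by nlinarith [hge]
  have hlt : ((a':ℤ)*(b:ℤ) - (a:ℤ)*(b':ℤ))^2 < (N:ℤ)^2 := by linarith [hid, hNN, hsq]
  have hD0 : ((a' * b : ℕ) : ℤ) - ((a * b' : ℕ) : ℤ) = 0 := by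
    by_contra hne
    have h1 : (N:ℤ) ≤ |((a' * b : ℕ) : ℤ) - ((a * b' : ℕ) : ℤ)| :=
      Int.le_of_dvd (abs_pos.mpr hne) ((dvd_abs _ _).mpr hd)
    have h2 : (0:ℤ) ≤ (N:ℤ) := Int.natCast_nonneg N
    have h3 := sq_abs (((a' * b : ℕ) : ℤ) - ((a * b' : ℕ) : ℤ))
    have h4 : (N:ℤ)^2 ≤ |((a' * b : ℕ) : ℤ) - ((a * b' : ℕ) : ℤ)|^2 :=
      pow_le_pow_left₀ h2 h1 2
    push_cast at h3 h4
    linarith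
  have : ((a' * b : ℕ) : ℤ) = ((a * b' : ℕ) : ℤ) := by linarith
  exact_mod_cast this
lemma rep_card_le (m : ℕ) (hm : m ≠ 0) :
    ((Finset.Icc 1 m ×ˢ Finset.Icc 1 m).filter (fun p : ℕ × ℕ => p.1^2 + p.2^2 = m)).card
      ≤ m.divisors.card ^ 2 := by
  classical
  set S := (Finset.Icc 1 m ×ˢ Finset.Icc 1 m).filter (fun p : ℕ × ℕ => p.1^2 + p.2^2 = m) with hS
  set D := m.divisors.filter (fun g => g^2 ∣ m) with hD
  have hmem : ∀ p ∈ S, Nat.gcd p.1 p.2 ∈ D := by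
    rintro ⟨x, y⟩ hp
    simp only [hS, Finset.mem_filter, Finset.mem_product, Finset.mem_Icc] at hp
    obtain ⟨⟨⟨hx1, hxm⟩, hy1, hym⟩, hsum⟩ := hp
    have hg2 : (Nat.gcd x y)^2 ∣ m := by
      rw [← hsum]
      exact dvd_add (pow_dvd_pow_of_dvd (Nat.gcd_dvd_left x y) 2)
        (pow_dvd_pow_of_dvd (Nat.gcd_dvd_right x y) 2)
    simp only [hD, Finset.mem_filter, Nat.mem_divisors]
    exact ⟨⟨dvd_trans (dvd_pow_self _ two_ne_zero) hg2, hm⟩, hg2⟩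
  rw [Finset.card_eq_sum_card_fiberwise hmem]
  have hbound : ∀ g ∈ D, (S.filter (fun p => Nat.gcd p.1 p.2 = g)).card ≤ m.divisors.card := by
    intro g hgD
    simp only [hD, Finset.mem_filter, Nat.mem_divisors] at hgD
    obtain ⟨⟨hgm, _⟩, hg2⟩ := hgD
    set N := m / g^2 with hN
    have hg0 : g ≠ 0 := by
      rintro rfl
      rw [zero_dvd_iff] at hgm
      exact hm hgm
    have hNg : g^2 * N = m := Nat.mul_div_cancel' hg2
    have hN0 : N ≠ 0 := by
      rintro h
      rw [h, mul_zero] at hNg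
      exact hm hNg.symm
    haveI : NeZero N := ⟨hN0⟩
    have hfact : ∀ p ∈ S.filter (fun p => Nat.gcd p.1 p.2 = g),
        ∃ a b : ℕ, p.1 = g * a ∧ p.2 = g * b ∧ p.1 / g = a ∧ p.2 / g = b ∧ 1 ≤ a ∧ 1 ≤ b ∧
          Nat.Coprime a b ∧ a^2 + b^2 = N ∧ Nat.Coprime b N := by
      rintro ⟨x, y⟩ hp
      simp only [hS, Finset.mem_filter, Finset.mem_product, Finset.mem_Icc] at hp
      obtain ⟨⟨⟨⟨hx1, hxm⟩, hy1, hym⟩, hsum⟩, hgcd⟩ := hp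
      have hgx : g ∣ x := hgcd ▸ Nat.gcd_dvd_left x y
      have hgy : g ∣ y := hgcd ▸ Nat.gcd_dvd_right x y
      have hco : Nat.Coprime (x/g) (y/g) := by
        have := Nat.coprime_div_gcd_div_gcd (m := x) (n := y) (by rw [hgcd]; omega)
        rwa [hgcd] at this
      have hsN : (x/g)^2 + (y/g)^2 = N := by
        have h1 : g^2 * ((x/g)^2 + (y/g)^2) = g^2 * N := by
          rw [hNg, ← hsum, mul_add, ← mul_pow, ← mul_pow,
            Nat.mul_div_cancel' hgx, Nat.mul_div_cancel' hgy]
        exact Nat.eq_of_mul_eq_mul_left (by positivity) h1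
      refine ⟨x / g, y / g, (Nat.mul_div_cancel' hgx).symm, (Nat.mul_div_cancel' hgy).symm,
        rfl, rfl, ?_, ?_, hco, hsN, ?_⟩
      · exact Nat.one_le_div_iff (Nat.pos_of_ne_zero hg0) |>.mpr (Nat.le_of_dvd (by omega) hgx)
      · exact Nat.one_le_div_iff (Nat.pos_of_ne_zero hg0) |>.mpr (Nat.le_of_dvd (by omega) hgy)
      · have h1 : Nat.Coprime (y/g) ((x/g)^2) := Nat.Coprime.pow_right 2 hco.symm
        have h2 : Nat.Coprime (y/g) ((x/g)^2 + (y/g)*(y/g)) :=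
          (Nat.coprime_add_mul_right_right (y/g) ((x/g)^2) (y/g)).mpr h1
        rwa [← pow_two, hsN] at h2
    set T := (Finset.univ : Finset (ZMod N)).filter (fun s => s^2 = -1) with hT
    set ψ : ℕ × ℕ → ZMod N := fun p => ((p.1 / g : ℕ) : ZMod N) * ((p.2 / g : ℕ) : ZMod N)⁻¹
      with hψ
    have hmaps : ∀ p ∈ S.filter (fun p => Nat.gcd p.1 p.2 = g), ψ p ∈ T := by
      intro p hp
      obtain ⟨a, b, hp1, hp2, hpa, hpb, ha1, hb1, hab, habN, hcbN⟩ := hfact p hp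
      have hub : IsUnit ((b : ℕ) : ZMod N) := (ZMod.isUnit_iff_coprime b N).mpr hcbN
      have hbb : ((b:ℕ) : ZMod N) * ((b:ℕ) : ZMod N)⁻¹ = 1 := ZMod.mul_inv_of_unit _ hub
      have hzero : ((a:ℕ) : ZMod N)^2 + ((b:ℕ) : ZMod N)^2 = 0 := by
        have hc := congrArg (fun k : ℕ => (k : ZMod N)) habN
        push_cast at hc
        rw [ZMod.natCast_self] at hc
        exact hc
      simp only [hT, Finset.mem_filter, Finset.mem_univ, true_and, hψ, hpa, hpb]
      linear_combination (((b:ℕ) : ZMod N)⁻¹)^2 * hzero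
        - (((b:ℕ) : ZMod N) * ((b:ℕ) : ZMod N)⁻¹ + 1) * hbb
    have hinj : Set.InjOn ψ (S.filter (fun p => Nat.gcd p.1 p.2 = g)) := by
      intro p hp q hq heq
      obtain ⟨a, b, hp1, hp2, hpa, hpb, ha1, hb1, hab, habN, hcbN⟩ := hfact p hp
      obtain ⟨a', b', hq1, hq2, hqa, hqb, ha1', hb1', hab', habN', hcbN'⟩ := hfact q hq
      have hub : IsUnit ((b : ℕ) : ZMod N) := (ZMod.isUnit_iff_coprime b N).mpr hcbN
      have hub' : IsUnit ((b' : ℕ) : ZMod N) := (ZMod.isUnit_iff_coprime b' N).mpr hcbN'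
      have hbb : ((b:ℕ) : ZMod N) * ((b:ℕ) : ZMod N)⁻¹ = 1 := ZMod.mul_inv_of_unit _ hub
      have hbb' : ((b':ℕ) : ZMod N) * ((b':ℕ) : ZMod N)⁻¹ = 1 := ZMod.mul_inv_of_unit _ hub'
      simp only [hψ, hpa, hpb, hqa, hqb] at heq
      have hcross : ((a * b' : ℕ) : ZMod N) = ((a' * b : ℕ) : ZMod N) := by
        push_cast
        linear_combination (((b:ℕ):ZMod N) * ((b':ℕ):ZMod N)) * heq
          - ((a:ℕ) * ((b':ℕ):ZMod N)) * hbb + ((a':ℕ) * ((b:ℕ):ZMod N)) * hbb'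
      have hmod : (N:ℤ) ∣ ((a' * b : ℕ) : ℤ) - ((a * b' : ℕ) : ℤ) := by
        have h1 := (ZMod.natCast_eq_natCast_iff _ _ _).mp hcross
        exact_mod_cast h1.dvd
      have heqn : a' * b = a * b' := cross_eq ha1 hb1 ha1' hb1' habN habN' hmod
      have haa : a = a' := by
        have hd1 : a ∣ a' * b := Dvd.intro b' heqn.symm
        have hd2 : a' ∣ a * b' := Dvd.intro b heqn
        exact Nat.dvd_antisymm (hab.dvd_of_dvd_mul_right hd1) (hab'.dvd_of_dvd_mul_right hd2)
      have hbb2 : b = b' := by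
        have h := heqn
        rw [← haa] at h
        exact Nat.eq_of_mul_eq_mul_left (Nat.lt_of_lt_of_le Nat.zero_lt_one ha1) h
      have h1 : p.1 = q.1 := by rw [hp1, hq1, haa]
      have h2 : p.2 = q.2 := by rw [hp2, hq2, hbb2]
      exact Prod.ext h1 h2
    have hcard1 : (S.filter (fun p => Nat.gcd p.1 p.2 = g)).card ≤ T.card :=
      Finset.card_le_card_of_injOn ψ hmaps hinj
    have hTrho : T.card = rho N := by
      rw [rho, Nat.card_eq_fintype_card, Fintype.card_subtype]
    have hNm : N ∣ m := Dvd.intro_left (g^2) hNg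
    calc (S.filter (fun p => Nat.gcd p.1 p.2 = g)).card ≤ T.card := hcard1
      _ = rho N := hTrho
      _ ≤ N.divisors.card := rho_le_tau N hN0
      _ ≤ m.divisors.card := Finset.card_le_card (Nat.divisors_subset_of_dvd hm hNm)
  calc ∑ g ∈ D, (S.filter (fun p => Nat.gcd p.1 p.2 = g)).card
      ≤ ∑ _g ∈ D, m.divisors.card := Finset.sum_le_sum hbound
    _ = D.card * m.divisors.card := by rw [Finset.sum_const, smul_eq_mul]
    _ ≤ m.divisors.card * m.divisors.card := by
        apply Nat.mul_le_mul_right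
        exact Finset.card_le_card (Finset.filter_subset _ _)
    _ = m.divisors.card ^ 2 := (sq m.divisors.card).symm
lemma tau_bound (ε : ℝ) (hε : 0 < ε) : ∃ C : ℝ, 1 ≤ C ∧
    ∀ n : ℕ, n ≠ 0 → (n.divisors.card : ℝ) ≤ C * (n:ℝ) ^ ε := by
  classical
  set δ : ℝ := (2:ℝ)^ε - 1 with hδ
  have hδpos : 0 < δ := by
    have : (1:ℝ) = (2:ℝ)^(0:ℝ) := by rw [Real.rpow_zero]
    have h2 : (2:ℝ)^(0:ℝ) < (2:ℝ)^ε := Real.rpow_lt_rpow_left_iff (by norm_num) |>.mpr hε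
    simp only [hδ]
    rw [Real.rpow_zero] at h2
    linarith
  set C₀ : ℝ := max 1 (1/δ) with hC₀
  have hC₀1 : 1 ≤ C₀ := le_max_left _ _
  have hC₀δ : 1 ≤ C₀ * δ := by
    have h1 : 1/δ ≤ C₀ := le_max_right _ _
    calc (1:ℝ) = (1/δ) * δ := by field_simp
      _ ≤ C₀ * δ := by apply mul_le_mul_of_nonneg_right h1 hδpos.le
  set K : ℕ := ⌊(2:ℝ)^(1/ε)⌋₊ + 1 with hK
  refine ⟨C₀ ^ K, one_le_pow₀ hC₀1, ?_⟩
  intro n hn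
  rw [Nat.card_divisors hn]
  push_cast
  have hstep : ∀ p ∈ n.primeFactors,
      ((n.factorization p : ℝ) + 1) ≤
        (if (p:ℝ) < (2:ℝ)^(1/ε) then C₀ else 1) * ((p:ℝ) ^ ε) ^ (n.factorization p) := by
    intro p hp
    have hpp : p.Prime := Nat.prime_of_mem_primeFactors hp
    have hp2 : (2:ℝ) ≤ (p:ℝ) := by exact_mod_cast hpp.two_le
    set e := n.factorization p with he
    have h2e : (2:ℝ)^ε ≤ (p:ℝ)^ε := Real.rpow_le_rpow (by norm_num) hp2 hε.le
    by_cases hsmall : (p:ℝ) < (2:ℝ)^(1/ε)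
    · rw [if_pos hsmall]
      have hbern : 1 + (e:ℝ) * δ ≤ (1 + δ)^e := one_add_mul_le_pow (by linarith) e
      have h1 : (e:ℝ) + 1 ≤ C₀ * (1 + (e:ℝ) * δ) := by
        have h2 : (e:ℝ) * 1 ≤ (e:ℝ) * (C₀ * δ) :=
          mul_le_mul_of_nonneg_left hC₀δ (Nat.cast_nonneg e)
        have h3 : C₀ * (1 + (e:ℝ) * δ) = C₀ + (e:ℝ) * (C₀ * δ) := by ring
        rw [h3]
        linarith
      have h4 : (1 + δ)^e ≤ ((p:ℝ)^ε)^e := by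
        apply pow_le_pow_left₀ (by linarith)
        simpa [hδ] using h2e
      calc (e:ℝ) + 1 ≤ C₀ * (1 + (e:ℝ) * δ) := h1
        _ ≤ C₀ * (1 + δ)^e := by
            apply mul_le_mul_of_nonneg_left hbern (by linarith)
        _ ≤ C₀ * ((p:ℝ)^ε)^e := by
            apply mul_le_mul_of_nonneg_left h4 (by linarith)
    · rw [if_neg hsmall]
      push_neg at hsmall
      have h2 : (2:ℝ) ≤ (p:ℝ)^ε := by
        have := Real.rpow_le_rpow (by positivity) hsmall hε.le
        rwa [← Real.rpow_mul (by norm_num), one_div, inv_mul_cancel₀ hε.ne',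
          Real.rpow_one] at this
      have h3 : (e:ℝ) + 1 ≤ (2:ℝ)^e := by
        have := Nat.lt_two_pow_self (n := e)
        have h4 : (e:ℝ) + 1 ≤ ((2:ℕ)^e : ℕ) := by exact_mod_cast this
        simpa using h4
      have h5 : ((2:ℝ))^e ≤ ((p:ℝ)^ε)^e := pow_le_pow_left₀ (by norm_num) h2 e
      rw [one_mul]
      linarith
  have hprod : ∏ p ∈ n.primeFactors, ((n.factorization p : ℝ) + 1) ≤
      ∏ p ∈ n.primeFactors,
        ((if (p:ℝ) < (2:ℝ)^(1/ε) then C₀ else 1) * ((p:ℝ) ^ ε) ^ (n.factorization p)) := by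
    apply Finset.prod_le_prod
    · intro p _; positivity
    · exact hstep
  rw [Finset.prod_mul_distrib] at hprod
  have hsecond : ∏ p ∈ n.primeFactors, ((p:ℝ) ^ ε) ^ (n.factorization p) = (n:ℝ) ^ ε := by
    have h1 : ∀ p ∈ n.primeFactors, ((p:ℝ) ^ ε) ^ (n.factorization p)
        = ((p ^ (n.factorization p) : ℕ) : ℝ) ^ ε := by
      intro p _
      rw [← Real.rpow_natCast ((p:ℝ)^ε) _, ← Real.rpow_mul (Nat.cast_nonneg p),
        mul_comm, Real.rpow_mul (Nat.cast_nonneg p), Real.rpow_natCast]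
      push_cast
      rfl
    rw [Finset.prod_congr rfl h1, Real.finset_prod_rpow _ _ (fun p _ => by positivity) ε]
    congr 1
    rw [← Nat.cast_prod]
    congr 1
    exact Nat.factorization_prod_pow_eq_self hn
  have hfirst : ∏ p ∈ n.primeFactors, (if (p:ℝ) < (2:ℝ)^(1/ε) then C₀ else 1) ≤ C₀ ^ K := by
    rw [← Finset.prod_filter]
    rw [Finset.prod_const]
    apply pow_le_pow_right₀ hC₀1
    have hsub : ∀ p : ℕ, p ∈ n.primeFactors → ((p:ℝ) < (2:ℝ)^(1/ε)) → p < K := by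
      intro p _ h
      have := Nat.le_floor h.le
      omega
    calc _ ≤ (Finset.range K).card := Finset.card_le_card (fun p hp => by
          simp only [Finset.mem_filter] at hp
          exact Finset.mem_range.mpr (hsub p hp.1 hp.2))
      _ = K := Finset.card_range K
  calc ∏ p ∈ n.primeFactors, ((n.factorization p : ℝ) + 1)
      ≤ (∏ p ∈ n.primeFactors, (if (p:ℝ) < (2:ℝ)^(1/ε) then C₀ else 1)) *
        ∏ p ∈ n.primeFactors, ((p:ℝ) ^ ε) ^ (n.factorization p) := hprod
    _ = (∏ p ∈ n.primeFactors, (if (p:ℝ) < (2:ℝ)^(1/ε) then C₀ else 1)) * (n:ℝ) ^ ε := by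
        rw [hsecond]
    _ ≤ C₀ ^ K * (n:ℝ) ^ ε :=
        mul_le_mul_of_nonneg_right hfirst (Real.rpow_nonneg (Nat.cast_nonneg n) ε)
theorem stmt_12 : ∀ ε : ℝ, 0 < ε → ∃ C : ℝ, 0 < C ∧
    ∀ (d : ℕ) (H : ℝ), 0 < d → 2 ≤ H →
      (Tcount H (d^2) : ℝ) ≤ C * H ^ (2 + ε : ℝ) / (d : ℝ)^2 := by
  intro ε hε
  set δ : ℝ := ε / 4 with hδ
  have hδpos : 0 < δ := by positivity
  obtain ⟨C₁, hC₁1, hC₁⟩ := tau_bound δ hδpos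
  refine ⟨3 * C₁^2 * (2:ℝ)^(2*δ), by positivity, ?_⟩
  intro d H hd hH
  have hH0 : (0:ℝ) < H := by linarith
  set L : ℕ := ⌊H⌋₊ with hL
  have hLH : (L:ℝ) ≤ H := Nat.floor_le hH0.le
  set S := ((Finset.Icc 1 L ×ˢ Finset.Icc 1 L).filter
    (fun p : ℕ × ℕ => ((d^2 : ℕ) : ℤ) ∣ ((p.1 : ℤ)^2 + (p.2 : ℤ)^2 + 1))) with hSdef
  have hT : Tcount H (d^2) = S.card := rfl
  set M := ((Finset.Ioc 2 (2*L^2+1)).filter (fun m => d^2 ∣ m)) with hM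
  have hmaps : ∀ p ∈ S, p.1^2 + p.2^2 + 1 ∈ M := by
    rintro ⟨x, y⟩ hp
    simp only [hSdef, Finset.mem_filter, Finset.mem_product, Finset.mem_Icc] at hp
    obtain ⟨⟨⟨hx1, hxL⟩, hy1, hyL⟩, hdvd⟩ := hp
    have hdvd' : d^2 ∣ x^2 + y^2 + 1 := by
      have : ((d^2 : ℕ) : ℤ) ∣ (((x^2 + y^2 + 1 : ℕ)) : ℤ) := by push_cast; push_cast at hdvd; exact hdvd
      exact_mod_cast this
    simp only [hM, Finset.mem_filter, Finset.mem_Ioc]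
    refine ⟨⟨by nlinarith, by nlinarith⟩, hdvd'⟩
  have hfiber : ∀ m ∈ M, (S.filter (fun p => p.1^2 + p.2^2 + 1 = m)).card
      ≤ (m-1).divisors.card ^ 2 := by
    intro m hm
    simp only [hM, Finset.mem_filter, Finset.mem_Ioc] at hm
    have hm2 : 2 < m := hm.1.1
    have hsub : S.filter (fun p => p.1^2 + p.2^2 + 1 = m) ⊆
        (Finset.Icc 1 (m-1) ×ˢ Finset.Icc 1 (m-1)).filter
          (fun p : ℕ × ℕ => p.1^2 + p.2^2 = m-1) := by
      rintro ⟨x, y⟩ hp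
      simp only [hSdef, Finset.mem_filter, Finset.mem_product, Finset.mem_Icc] at hp ⊢
      obtain ⟨⟨⟨⟨hx1, hxL⟩, hy1, hyL⟩, _⟩, hsum⟩ := hp
      have hxy : x^2 + y^2 = m - 1 := by omega
      have hx2 : x ≤ x^2 := Nat.le_self_pow two_ne_zero x
      have hy2 : y ≤ y^2 := Nat.le_self_pow two_ne_zero y
      exact ⟨⟨⟨hx1, by omega⟩, hy1, by omega⟩, hxy⟩
    calc (S.filter (fun p => p.1^2 + p.2^2 + 1 = m)).card
        ≤ _ := Finset.card_le_card hsub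
      _ ≤ (m-1).divisors.card ^ 2 := rep_card_le (m-1) (by omega)
  -- pass to reals
  have hcard : S.card = ∑ m ∈ M, (S.filter (fun p => p.1^2 + p.2^2 + 1 = m)).card :=
    Finset.card_eq_sum_card_fiberwise hmaps
  set B : ℝ := C₁^2 * ((2:ℝ) * H^2) ^ (2*δ) with hB
  have hBpos : 0 ≤ B := by positivity
  have hperm : ∀ m ∈ M, ((S.filter (fun p => p.1^2 + p.2^2 + 1 = m)).card : ℝ) ≤ B := by
    intro m hm
    have h1 := hfiber m hm
    simp only [hM, Finset.mem_filter, Finset.mem_Ioc] at hm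
    have hm2 : 2 < m := hm.1.1
    have hmle : m ≤ 2*L^2+1 := hm.1.2
    have htau : ((m-1).divisors.card : ℝ) ≤ C₁ * ((m-1 : ℕ):ℝ) ^ δ := hC₁ (m-1) (by omega)
    have hmH : ((m-1 : ℕ):ℝ) ≤ 2 * H^2 := by
      have h2 : ((m-1:ℕ):ℝ) ≤ 2*(L:ℝ)^2 := by
        have : (m-1:ℕ) ≤ 2*L^2 := by omega
        exact_mod_cast this
      nlinarith
    have hrpow : ((m-1 : ℕ):ℝ) ^ δ ≤ ((2:ℝ) * H^2) ^ δ :=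
      Real.rpow_le_rpow (Nat.cast_nonneg _) hmH hδpos.le
    calc ((S.filter (fun p => p.1^2 + p.2^2 + 1 = m)).card : ℝ)
        ≤ (((m-1).divisors.card : ℕ) : ℝ)^2 := by exact_mod_cast h1
      _ ≤ (C₁ * ((2:ℝ) * H^2) ^ δ)^2 := by
          apply pow_le_pow_left₀ (Nat.cast_nonneg _)
          calc ((m-1).divisors.card : ℝ) ≤ C₁ * ((m-1 : ℕ):ℝ) ^ δ := htau
            _ ≤ C₁ * ((2:ℝ) * H^2) ^ δ := by
                apply mul_le_mul_of_nonneg_left hrpow (by linarith)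
      _ = B := by
          have hsq : (((2:ℝ) * H^2) ^ δ)^2 = ((2:ℝ)*H^2)^(2*δ) := by
            rw [← Real.rpow_natCast (((2:ℝ) * H^2) ^ δ) 2, ← Real.rpow_mul (by positivity)]
            norm_num [mul_comm]
          rw [mul_pow, hsq, hB]
  have hsumB : (S.card : ℝ) ≤ (M.card : ℝ) * B := by
    rw [hcard]
    push_cast
    calc ∑ m ∈ M, ((S.filter (fun p => p.1^2 + p.2^2 + 1 = m)).card : ℝ)
        ≤ ∑ _m ∈ M, B := Finset.sum_le_sum hperm
      _ = (M.card : ℝ) * B := by rw [Finset.sum_const, nsmul_eq_mul]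
  -- bound card M
  have hMcard : (M.card : ℝ) ≤ 3 * H^2 / (d:ℝ)^2 := by
    have hsub : M ⊆ (Finset.Ioc 0 (2*L^2+1)).filter (fun m => d^2 ∣ m) := by
      intro m hm
      simp only [hM, Finset.mem_filter, Finset.mem_Ioc] at hm ⊢
      exact ⟨⟨by omega, hm.1.2⟩, hm.2⟩
    have h1 : M.card ≤ (2*L^2+1) / d^2 := by
      calc M.card ≤ _ := Finset.card_le_card hsub
        _ = (2*L^2+1) / d^2 := Nat.Ioc_filter_dvd_card_eq_div _ _
    have h2 : ((2*L^2+1) / d^2 : ℕ) ≤ ((2*L^2+1 : ℕ) : ℝ) / ((d^2 : ℕ) : ℝ) :=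
      Nat.cast_div_le
    have h3 : ((2*L^2+1 : ℕ) : ℝ) ≤ 3 * H^2 := by
      push_cast
      nlinarith [hLH, Nat.cast_nonneg (α := ℝ) L]
    have hd2 : (0:ℝ) < ((d^2 : ℕ) : ℝ) := by positivity
    calc (M.card : ℝ) ≤ ((2*L^2+1) / d^2 : ℕ) := by exact_mod_cast h1
      _ ≤ ((2*L^2+1 : ℕ) : ℝ) / ((d^2 : ℕ) : ℝ) := h2
      _ ≤ 3 * H^2 / ((d^2 : ℕ) : ℝ) := by gcongr
      _ = 3 * H^2 / (d:ℝ)^2 := by push_cast; ring_nf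
  -- final computation
  have hfinal : (3 * H^2 / (d:ℝ)^2) * B = (3 * C₁^2 * (2:ℝ)^(2*δ)) * H ^ (2 + ε : ℝ) / (d : ℝ)^2 := by
    rw [hB]
    have hmul : ((2:ℝ) * H^2) ^ (2*δ) = (2:ℝ)^(2*δ) * (H^2) ^ (2*δ) :=
      Real.mul_rpow (by norm_num) (by positivity)
    have hHsq : ((H:ℝ)^2) ^ (2*δ) = H ^ (4*δ : ℝ) := by
      rw [← Real.rpow_natCast H 2, ← Real.rpow_mul hH0.le]
      norm_num
      ring_nf
    have hsplit : H ^ (2 + ε : ℝ) = H^2 * H ^ (ε : ℝ) := by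
      rw [Real.rpow_add hH0, Real.rpow_two]
    have h4δ : (4 : ℝ) * δ = ε := by rw [hδ]; ring
    rw [hmul, hHsq, h4δ, hsplit]
    ring
  calc (Tcount H (d^2) : ℝ) = (S.card : ℝ) := by rw [hT]
    _ ≤ (M.card : ℝ) * B := hsumB
    _ ≤ (3 * H^2 / (d:ℝ)^2) * B := mul_le_mul_of_nonneg_right hMcard hBpos
    _ = (3 * C₁^2 * (2:ℝ)^(2*δ)) * H ^ (2 + ε : ℝ) / (d : ℝ)^2 := hfinal
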